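/- Let ρ, σ be density matrices on an n-partite Hilbert space, and for T ⊆ [n] define the shadow enumerator s_T(ρ,σ) := (1/2^n) ∑_{S ⊆ [n]} (-1)^(|S ∩ T^c|) Tr(ρ_S σ_S). Then s_T(ρ,σ) ≥ 0 for every T ⊆ [n] (the shadow inequalities). -/

import Mathlib

open Finset ComplexOrder Kronecker Matrix

noncomputable def ptrace {n : ℕ} (d : Fin n → ℕ) (S : Finset (Fin n))
    (ρ : Matrix ((i : Fin n) → Fin (d i)) ((i : Fin n) → Fin (d i)) ℂ) :
    Matrix ((i : {j : Fin n // j ∈ S}) → Fin (d i.1))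
           ((i : {j : Fin n // j ∈ S}) → Fin (d i.1)) ℂ :=
  fun x y => ∑ z : (i : {j : Fin n // j ∉ S}) → Fin (d i.1),
    ρ (fun i => if h : i ∈ S then x ⟨i, h⟩ else z ⟨i, h⟩)
      (fun i => if h : i ∈ S then y ⟨i, h⟩ else z ⟨i, h⟩)

/-- `Tr(ρ_S σ_S)`, the overlap of the reduced states on `S`. -/
noncomputable def overlap {n : ℕ} (d : Fin n → ℕ) (S : Finset (Fin n))
    (ρ σ : Matrix ((i : Fin n) → Fin (d i)) ((i : Fin n) → Fin (d i)) ℂ) : ℂ :=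
  (ptrace d S ρ * ptrace d S σ).trace

/-- A density matrix: positive semidefinite with unit trace. -/
def IsDensity {m : Type*} [Fintype m] [DecidableEq m] (ρ : Matrix m m ℂ) : Prop :=
  ρ.PosSemidef ∧ ρ.trace = 1

/-- The shadow inequalities: for density matrices `ρ, σ` on an `n`-partite space and any
`T ⊆ [n]`, the shadow enumerator
`s_T(ρ,σ) = (1/2^n) ∑_{S ⊆ [n]} (-1)^(|S ∩ Tᶜ|) Tr(ρ_S σ_S)` is nonnegative
(as a complex number, with respect to the complex order). -/

noncomputable def gfun (ε : ℂ) {m : ℕ} (a c b e : Fin m) : ℂ :=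
  (1 / 2) * ((if a = b then 1 else 0) * (if c = e then 1 else 0) +
    ε * ((if a = e then 1 else 0) * (if c = b then 1 else 0)))

lemma gfun_symm (ε : ℂ) {m : ℕ} (a c b e : Fin m) : gfun ε a c b e = gfun ε b e a c := by
  by_cases h1 : a = b <;> by_cases h2 : c = e <;> by_cases h3 : a = e <;> by_cases h4 : c = b <;>
    simp [gfun, h1, h2, h3, h4, eq_comm]

lemma gfun_star {ε : ℂ} (hε : ε = 1 ∨ ε = -1) {m : ℕ} (a c b e : Fin m) :
    star (gfun ε a c b e) = gfun ε a c b e := by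
  rcases hε with rfl | rfl <;> simp [gfun, apply_ite (starRingEnd ℂ)]

lemma gfun_conv {ε : ℂ} (hε : ε = 1 ∨ ε = -1) {m : ℕ} (a c b e : Fin m) :
    ∑ x : Fin m, ∑ y : Fin m, gfun ε a c x y * gfun ε x y b e = gfun ε a c b e := by
  simp only [gfun, mul_add, add_mul, mul_ite, ite_mul, one_mul, mul_one, mul_zero, zero_mul,
    Finset.sum_add_distrib, Finset.sum_ite_eq, Finset.sum_ite_eq', Finset.mem_univ, if_true]
  rcases hε with rfl | rfl <;> by_cases h1 : a = b <;> by_cases h2 : c = e <;>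
    by_cases h3 : a = e <;> by_cases h4 : c = b <;> simp_all <;> ring

lemma trace_conjTranspose_mul_self_nonneg {m : Type*} [Fintype m] (M : Matrix m m ℂ) :
    0 ≤ (Mᴴ * M).trace := by
  rw [Matrix.trace]
  refine Finset.sum_nonneg fun j _ => ?_
  simp only [Matrix.diag_apply, Matrix.mul_apply, Matrix.conjTranspose_apply]
  exact Finset.sum_nonneg fun i _ => star_mul_self_nonneg _

lemma trace_mul_nonneg' {m : Type*} [Fintype m] [DecidableEq m] {A B : Matrix m m ℂ}
    (hA : A.PosSemidef) (hB : B.PosSemidef) : 0 ≤ (A * B).trace := by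
  obtain ⟨C, rfl⟩ : ∃ C, A = Cᴴ * C := by
    open scoped MatrixOrder Matrix.Norms.L2Operator in
    exact CStarAlgebra.nonneg_iff_eq_star_mul_self.mp hA.nonneg
  obtain ⟨D, rfl⟩ : ∃ D, B = Dᴴ * D := by
    open scoped MatrixOrder Matrix.Norms.L2Operator in
    exact CStarAlgebra.nonneg_iff_eq_star_mul_self.mp hB.nonneg
  have h : Cᴴ * C * (Dᴴ * D) = (Cᴴ * (C * Dᴴ)) * D := by noncomm_ring
  rw [h, Matrix.trace_mul_comm]
  have h2 : D * (Cᴴ * (C * Dᴴ)) = (C * Dᴴ)ᴴ * (C * Dᴴ) := by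
    rw [Matrix.conjTranspose_mul, Matrix.conjTranspose_conjTranspose]; noncomm_ring
  rw [h2]
  exact trace_conjTranspose_mul_self_nonneg _

lemma kron_posSemidef {I J : Type*} [Fintype I] [Fintype J] [DecidableEq I] [DecidableEq J]
    {A : Matrix I I ℂ} {B : Matrix J J ℂ} (hA : A.PosSemidef) (hB : B.PosSemidef) :
    (A ⊗ₖ B).PosSemidef := by
  obtain ⟨C, rfl⟩ : ∃ C, A = Cᴴ * C := by
    open scoped MatrixOrder Matrix.Norms.L2Operator in
    exact CStarAlgebra.nonneg_iff_eq_star_mul_self.mp hA.nonneg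
  obtain ⟨D, rfl⟩ : ∃ D, B = Dᴴ * D := by
    open scoped MatrixOrder Matrix.Norms.L2Operator in
    exact CStarAlgebra.nonneg_iff_eq_star_mul_self.mp hB.nonneg
  rw [Matrix.mul_kronecker_mul]
  have : Cᴴ ⊗ₖ Dᴴ = (C ⊗ₖ D)ᴴ := by
    ext ⟨i, j⟩ ⟨k, l⟩
    simp [Matrix.conjTranspose_apply, mul_comm]
  rw [this]
  exact Matrix.posSemidef_conjTranspose_mul_self _


noncomputable def epsT {n : ℕ} (T : Finset (Fin n)) (i : Fin n) : ℂ :=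
  if i ∈ T then 1 else -1

lemma epsT_cases {n : ℕ} (T : Finset (Fin n)) (i : Fin n) : epsT T i = 1 ∨ epsT T i = -1 := by
  unfold epsT; split <;> simp

noncomputable def Pmat {n : ℕ} (d : Fin n → ℕ) (T : Finset (Fin n)) :
    Matrix (((i : Fin n) → Fin (d i)) × ((i : Fin n) → Fin (d i)))
           (((i : Fin n) → Fin (d i)) × ((i : Fin n) → Fin (d i))) ℂ :=
  fun p q => ∏ i, gfun (epsT T i) (p.1 i) (p.2 i) (q.1 i) (q.2 i)

lemma Pmat_conjTranspose {n : ℕ} (d : Fin n → ℕ) (T : Finset (Fin n)) :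
    (Pmat d T)ᴴ = Pmat d T := by
  ext p q
  simp only [conjTranspose_apply, Pmat]
  rw [star_prod]
  exact Finset.prod_congr rfl fun i _ => by
    rw [gfun_star (epsT_cases T i), gfun_symm]

lemma Pmat_mul_self {n : ℕ} (d : Fin n → ℕ) (T : Finset (Fin n)) :
    Pmat d T * Pmat d T = Pmat d T := by
  ext p q
  simp only [Matrix.mul_apply, Pmat]
  rw [Fintype.sum_prod_type]
  calc ∑ x : (i : Fin n) → Fin (d i), ∑ y : (i : Fin n) → Fin (d i),
        (∏ i, gfun (epsT T i) (p.1 i) (p.2 i) (x i) (y i)) *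
          ∏ i, gfun (epsT T i) (x i) (y i) (q.1 i) (q.2 i)
      = ∑ x : (i : Fin n) → Fin (d i), ∑ y : (i : Fin n) → Fin (d i),
          ∏ i, (gfun (epsT T i) (p.1 i) (p.2 i) (x i) (y i) *
            gfun (epsT T i) (x i) (y i) (q.1 i) (q.2 i)) := by
        simp [Finset.prod_mul_distrib]
    _ = ∑ x : (i : Fin n) → Fin (d i), ∏ i, ∑ t,
          (gfun (epsT T i) (p.1 i) (p.2 i) (x i) t *
            gfun (epsT T i) (x i) t (q.1 i) (q.2 i)) :=
        Finset.sum_congr rfl fun x _ =>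
          (Fintype.prod_sum (fun i (t : Fin (d i)) => gfun (epsT T i) (p.1 i) (p.2 i) (x i) t *
            gfun (epsT T i) (x i) t (q.1 i) (q.2 i))).symm
    _ = ∏ i, ∑ s, ∑ t, (gfun (epsT T i) (p.1 i) (p.2 i) s t *
          gfun (epsT T i) s t (q.1 i) (q.2 i)) :=
        (Fintype.prod_sum (fun i (s : Fin (d i)) => ∑ t, gfun (epsT T i) (p.1 i) (p.2 i) s t *
          gfun (epsT T i) s t (q.1 i) (q.2 i))).symm
    _ = ∏ i, gfun (epsT T i) (p.1 i) (p.2 i) (q.1 i) (q.2 i) :=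
        Finset.prod_congr rfl fun i _ => gfun_conv (epsT_cases T i) _ _ _ _

lemma Pmat_posSemidef {n : ℕ} (d : Fin n → ℕ) (T : Finset (Fin n)) :
    (Pmat d T).PosSemidef := by
  have h : Pmat d T = (Pmat d T)ᴴ * Pmat d T := by
    rw [Pmat_conjTranspose, Pmat_mul_self]
  rw [h]
  exact Matrix.posSemidef_conjTranspose_mul_self _


noncomputable def dd {m : ℕ} (u v : Fin m) : ℂ := if u = v then 1 else 0

lemma delta_pi {n : ℕ} {d : Fin n → ℕ} (b v : (i : Fin n) → Fin (d i)) :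
    ∏ i, dd (b i) (v i) = if b = v then 1 else 0 := by
  simp only [dd, Finset.prod_boole]
  congr 1
  simp [funext_iff, eq_iff_iff]

lemma sum_split {n : ℕ} (d : Fin n → ℕ) (S : Finset (Fin n))
    (f : ((i : Fin n) → Fin (d i)) → ℂ) :
    ∑ a : (i : Fin n) → Fin (d i), f a =
      ∑ x : (i : {j : Fin n // j ∈ S}) → Fin (d i.1),
        ∑ z : (i : {j : Fin n // j ∉ S}) → Fin (d i.1),
          f (fun i => if h : i ∈ S then x ⟨i, h⟩ else z ⟨i, h⟩) := by
  calc ∑ a : (i : Fin n) → Fin (d i), f a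
      = ∑ p : ((i : {j : Fin n // j ∈ S}) → Fin (d i.1)) ×
          ((i : {j : Fin n // j ∉ S}) → Fin (d i.1)),
          f (fun i => if h : i ∈ S then p.1 ⟨i, h⟩ else p.2 ⟨i, h⟩) := by
        apply Fintype.sum_equiv (Equiv.piEquivPiSubtypeProd (· ∈ S) (fun i => Fin (d i)))
        intro a
        congr 1
        funext i
        by_cases h : i ∈ S <;> simp [Equiv.piEquivPiSubtypeProd, h]
    _ = _ := Fintype.sum_prod_type _

lemma overlap_eq_pair {n : ℕ} (d : Fin n → ℕ) (S : Finset (Fin n))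
    (ρ σ : Matrix ((i : Fin n) → Fin (d i)) ((i : Fin n) → Fin (d i)) ℂ) :
    overlap d S ρ σ = ∑ a : (i : Fin n) → Fin (d i), ∑ c : (i : Fin n) → Fin (d i),
      ρ a (fun i => if i ∈ S then c i else a i) * σ c (fun i => if i ∈ S then a i else c i) := by
  have hL : overlap d S ρ σ =
      ∑ x : (i : {j : Fin n // j ∈ S}) → Fin (d i.1),
      ∑ y : (i : {j : Fin n // j ∈ S}) → Fin (d i.1),
      ∑ z : (i : {j : Fin n // j ∉ S}) → Fin (d i.1),
      ∑ w : (i : {j : Fin n // j ∉ S}) → Fin (d i.1),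
        ρ (fun i => if h : i ∈ S then x ⟨i, h⟩ else z ⟨i, h⟩)
          (fun i => if h : i ∈ S then y ⟨i, h⟩ else z ⟨i, h⟩) *
        σ (fun i => if h : i ∈ S then y ⟨i, h⟩ else w ⟨i, h⟩)
          (fun i => if h : i ∈ S then x ⟨i, h⟩ else w ⟨i, h⟩) := by
    simp only [overlap, Matrix.trace, Matrix.diag, Matrix.mul_apply, ptrace]
    refine Finset.sum_congr rfl fun x _ => Finset.sum_congr rfl fun y _ => ?_
    rw [Finset.sum_mul_sum]
  rw [hL]
  rw [sum_split d S (f := fun a => ∑ c : (i : Fin n) → Fin (d i),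
      ρ a (fun i => if i ∈ S then c i else a i) * σ c (fun i => if i ∈ S then a i else c i))]
  refine Finset.sum_congr rfl fun x _ => ?_
  rw [Finset.sum_comm]
  refine Finset.sum_congr rfl fun z _ => ?_
  rw [sum_split d S (f := fun c =>
      ρ (fun i => if h : i ∈ S then x ⟨i, h⟩ else z ⟨i, h⟩)
        (fun i => if i ∈ S then c i else if h : i ∈ S then x ⟨i, h⟩ else z ⟨i, h⟩) *
      σ c (fun i => if i ∈ S then (if h : i ∈ S then x ⟨i, h⟩ else z ⟨i, h⟩) else c i))]
  refine Finset.sum_congr rfl fun y _ => Finset.sum_congr rfl fun w _ => ?_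
  congr 1
  · congr 1
    funext i
    by_cases h : i ∈ S <;> simp [h]
  · congr 1
    funext i
    by_cases h : i ∈ S <;> simp [h]

lemma dd_comm {m : ℕ} (u v : Fin m) : dd u v = dd v u := by simp [dd, eq_comm]

lemma overlap_eq_delta {n : ℕ} (d : Fin n → ℕ) (S : Finset (Fin n))
    (ρ σ : Matrix ((i : Fin n) → Fin (d i)) ((i : Fin n) → Fin (d i)) ℂ) :
    overlap d S ρ σ = ∑ a : (i : Fin n) → Fin (d i), ∑ b : (i : Fin n) → Fin (d i),
      ∑ c : (i : Fin n) → Fin (d i), ∑ e : (i : Fin n) → Fin (d i),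
      ρ a b * σ c e *
        ∏ i, (if i ∈ S then dd (a i) (e i) * dd (c i) (b i)
              else dd (a i) (b i) * dd (c i) (e i)) := by
  rw [overlap_eq_pair]
  refine Finset.sum_congr rfl fun a _ => ?_
  rw [Finset.sum_comm]
  refine Finset.sum_congr rfl fun c _ => ?_
  have hfac : ∀ b e : (i : Fin n) → Fin (d i),
      (∏ i, (if i ∈ S then dd (a i) (e i) * dd (c i) (b i)
            else dd (a i) (b i) * dd (c i) (e i)))
      = (if b = (fun i => if i ∈ S then c i else a i) then 1 else 0) *
        (if e = (fun i => if i ∈ S then a i else c i) then 1 else 0) := by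
    intro b e
    rw [← delta_pi b _, ← delta_pi e _, ← Finset.prod_mul_distrib]
    refine Finset.prod_congr rfl fun i _ => ?_
    by_cases h : i ∈ S
    · simp only [h, if_true]
      rw [dd_comm (b i), dd_comm (e i)]
      ring
    · simp only [h, if_false]
      rw [dd_comm (b i), dd_comm (e i)]
  simp only [hfac]
  simp [mul_ite, mul_one, mul_zero, ite_mul, zero_mul, Finset.sum_ite_eq', Finset.mem_univ]


lemma sign_eq {n : ℕ} (T S : Finset (Fin n)) :
    ((-1 : ℂ)) ^ (S ∩ Tᶜ).card = ∏ i ∈ S, epsT T i := by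
  unfold epsT
  rw [Finset.prod_ite]
  have h : S.filter (fun i => ¬ i ∈ T) = S ∩ Tᶜ := by ext i; simp
  simp [h]

lemma filter_not_mem_eq_compl {n : ℕ} (S : Finset (Fin n)) :
    Finset.univ.filter (fun i => ¬ i ∈ S) = Sᶜ := by ext i; simp

lemma key_sum {n : ℕ} (d : Fin n → ℕ) (T : Finset (Fin n))
    (a b c e : (i : Fin n) → Fin (d i)) :
    ∑ S : Finset (Fin n), (-1 : ℂ) ^ (S ∩ Tᶜ).card *
      ∏ i, (if i ∈ S then dd (a i) (e i) * dd (c i) (b i)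
            else dd (a i) (b i) * dd (c i) (e i)) =
    (2 : ℂ) ^ n * ∏ i, gfun (epsT T i) (a i) (c i) (b i) (e i) := by
  have h1 : ∀ S : Finset (Fin n),
      (-1 : ℂ) ^ (S ∩ Tᶜ).card *
        ∏ i, (if i ∈ S then dd (a i) (e i) * dd (c i) (b i)
              else dd (a i) (b i) * dd (c i) (e i)) =
      (∏ i ∈ S, epsT T i * (dd (a i) (e i) * dd (c i) (b i))) *
        ∏ i ∈ Sᶜ, dd (a i) (b i) * dd (c i) (e i) := by
    intro S
    rw [sign_eq T S, Finset.prod_ite, Finset.filter_univ_mem, filter_not_mem_eq_compl,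
      ← mul_assoc, ← Finset.prod_mul_distrib]
  simp only [h1]
  rw [← Fintype.prod_add]
  have h2 : ∀ i, epsT T i * (dd (a i) (e i) * dd (c i) (b i)) +
      dd (a i) (b i) * dd (c i) (e i) =
      2 * gfun (epsT T i) (a i) (c i) (b i) (e i) := by
    intro i; simp only [gfun, dd]; ring
  simp only [h2]
  rw [Finset.prod_mul_distrib, Finset.prod_const, Finset.card_univ, Fintype.card_fin]

lemma trace_eq {n : ℕ} (d : Fin n → ℕ) (T : Finset (Fin n))
    (ρ σ : Matrix ((i : Fin n) → Fin (d i)) ((i : Fin n) → Fin (d i)) ℂ) :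
    ((ρ ⊗ₖ σ) * Pmat d T).trace =
      ∑ a : (i : Fin n) → Fin (d i), ∑ b : (i : Fin n) → Fin (d i),
      ∑ c : (i : Fin n) → Fin (d i), ∑ e : (i : Fin n) → Fin (d i),
        ρ a b * σ c e * ∏ i, gfun (epsT T i) (a i) (c i) (b i) (e i) := by
  simp only [Matrix.trace, Matrix.diag, Matrix.mul_apply, Pmat, kroneckerMap_apply,
    Fintype.sum_prod_type]
  refine Finset.sum_congr rfl fun a _ => ?_
  rw [Finset.sum_comm]
  refine Finset.sum_congr rfl fun b _ => Finset.sum_congr rfl fun c _ =>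
    Finset.sum_congr rfl fun e _ => ?_
  congr 1
  exact Finset.prod_congr rfl fun i _ => (gfun_symm _ _ _ _ _).symm

lemma sum_sign_overlap {n : ℕ} (d : Fin n → ℕ) (T : Finset (Fin n))
    (ρ σ : Matrix ((i : Fin n) → Fin (d i)) ((i : Fin n) → Fin (d i)) ℂ) :
    ∑ S : Finset (Fin n), (-1 : ℂ) ^ (S ∩ Tᶜ).card * overlap d S ρ σ =
      (2 : ℂ) ^ n * ((ρ ⊗ₖ σ) * Pmat d T).trace := by
  rw [trace_eq]
  simp only [overlap_eq_delta d _ ρ σ, Finset.mul_sum]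
  rw [Finset.sum_comm]
  refine Finset.sum_congr rfl fun a _ => ?_
  rw [Finset.sum_comm]
  refine Finset.sum_congr rfl fun b _ => ?_
  rw [Finset.sum_comm]
  refine Finset.sum_congr rfl fun c _ => ?_
  rw [Finset.sum_comm]
  refine Finset.sum_congr rfl fun e _ => ?_
  calc ∑ S : Finset (Fin n), (-1 : ℂ) ^ (S ∩ Tᶜ).card *
        (ρ a b * σ c e *
          ∏ i, (if i ∈ S then dd (a i) (e i) * dd (c i) (b i)
                else dd (a i) (b i) * dd (c i) (e i)))
      = ρ a b * σ c e * ∑ S : Finset (Fin n), (-1 : ℂ) ^ (S ∩ Tᶜ).card *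
          ∏ i, (if i ∈ S then dd (a i) (e i) * dd (c i) (b i)
                else dd (a i) (b i) * dd (c i) (e i)) := by
        rw [Finset.mul_sum]
        exact Finset.sum_congr rfl fun S _ => by ring
    _ = ρ a b * σ c e * ((2 : ℂ) ^ n * ∏ i, gfun (epsT T i) (a i) (c i) (b i) (e i)) := by
        rw [key_sum]
    _ = (2 : ℂ) ^ n * (ρ a b * σ c e * ∏ i, gfun (epsT T i) (a i) (c i) (b i) (e i)) := by
        ring

theorem shadow_inequalities {n : ℕ} (d : Fin n → ℕ)
    (ρ σ : Matrix ((i : Fin n) → Fin (d i)) ((i : Fin n) → Fin (d i)) ℂ)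
    (hρ : IsDensity ρ) (hσ : IsDensity σ) (T : Finset (Fin n)) :
    0 ≤ (1 / 2 ^ n : ℂ) *
        ∑ S : Finset (Fin n), (-1 : ℂ) ^ (S ∩ Tᶜ).card * overlap d S ρ σ := by
  have h := trace_mul_nonneg' (kron_posSemidef hρ.1 hσ.1) (Pmat_posSemidef d T)
  rw [sum_sign_overlap d T ρ σ]
  have h2 : (1 / 2 ^ n : ℂ) * ((2 : ℂ) ^ n * ((ρ ⊗ₖ σ) * Pmat d T).trace)
      = ((ρ ⊗ₖ σ) * Pmat d T).trace := by
    field_simp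
  rw [h2]
  exact h
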